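/- (Chain trace inequality.) Let k ≥ 2 and let A_1,…,A_k be positive semidefinite d×d real matrices. Then Tr(A_1 A_2 ⋯ A_k) ≤ ‖A_k^{1/2} A_1^{1/2}‖_F · Π_{i=1}^{k−1} ‖A_i^{1/2} A_{i+1}^{1/2}‖_F, i.e. the trace of the cyclic product is bounded by the product over the cycle of the Frobenius norms of products of consecutive PSD square roots. -/

import Mathlib

open Matrix Filter Finset Set
open scoped BigOperators

noncomputable section

/-- Frobenius norm of a real square matrix. -/
def frob {n : Type*} [Fintype n] (M : Matrix n n ℝ) : ℝ :=
  Real.sqrt (∑ i, ∑ j, (M i j) ^ 2)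

open Classical in
/-- The positive semidefinite square root of a matrix (junk value `0` on non-PSD input). -/
def psdSqrt {n : Type*} [Fintype n] [DecidableEq n] (A : Matrix n n ℝ) : Matrix n n ℝ :=
  if h : A.PosSemidef then
    (h.1.eigenvectorUnitary : Matrix n n ℝ) * diagonal (Real.sqrt ∘ h.1.eigenvalues) *
      (star h.1.eigenvectorUnitary : Matrix n n ℝ)
  else 0

open Classical in
/-- The largest eigenvalue of a symmetric real matrix (junk value `0` otherwise). -/
def lamMax {n : Type*} [Fintype n] [DecidableEq n] (A : Matrix n n ℝ) : ℝ :=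
  if h : A.IsHermitian then ⨆ i, h.eigenvalues i else 0

/-- Probability of observing the Bernoulli(B/n) selection pattern `x`. -/
def selProb (n B : ℕ) (x : Fin n → Bool) : ℝ :=
  ∏ i, if x i then (B : ℝ) / n else 1 - (B : ℝ) / n

/-- Average Hessian of a family. -/
def Hbar {d n : ℕ} (H : Fin n → Matrix (Fin d) (Fin d) ℝ) : Matrix (Fin d) (Fin d) ℝ :=
  (n : ℝ)⁻¹ • ∑ i, H i

/-- Mean update operator `J = I − η(1−α)H_R + ηα H_F`. -/
def Jbar {d nr nf : ℕ} (η α : ℝ) (HR : Fin nr → Matrix (Fin d) (Fin d) ℝ)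
    (HF : Fin nf → Matrix (Fin d) (Fin d) ℝ) : Matrix (Fin d) (Fin d) ℝ :=
  1 - (η * (1 - α)) • Hbar HR + (η * α) • Hbar HF

/-- Random update operator for the batch-selection pattern `x`. -/
def Jop {d nr nf : ℕ} (η α : ℝ) (B : ℕ) (HR : Fin nr → Matrix (Fin d) (Fin d) ℝ)
    (HF : Fin nf → Matrix (Fin d) (Fin d) ℝ)
    (x : (Fin nr → Bool) × (Fin nf → Bool)) : Matrix (Fin d) (Fin d) ℝ :=
  1 - (η * (1 - α) / B) • (∑ r, if x.1 r then HR r else 0)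
    + (η * α / B) • (∑ f, if x.2 f then HF f else 0)

/-- `C_r = η²(1−α)²(1/n_r)(1/B − 1/n_r)`. -/
def Crc (η α : ℝ) (B nr : ℕ) : ℝ :=
  η ^ 2 * (1 - α) ^ 2 * (nr : ℝ)⁻¹ * ((B : ℝ)⁻¹ - (nr : ℝ)⁻¹)

/-- `C_f = η²α²(1/n_f)(1/B − 1/n_f)`. -/
def Cfc (η α : ℝ) (B nf : ℕ) : ℝ :=
  η ^ 2 * α ^ 2 * (nf : ℝ)⁻¹ * ((B : ℝ)⁻¹ - (nf : ℝ)⁻¹)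

/-- Noise-accumulation matrices `N_k`. -/
def Nmat {d nr nf : ℕ} (η α : ℝ) (B : ℕ) (HR : Fin nr → Matrix (Fin d) (Fin d) ℝ)
    (HF : Fin nf → Matrix (Fin d) (Fin d) ℝ) : ℕ → Matrix (Fin d) (Fin d) ℝ
  | 0 => 1
  | k + 1 =>
      Cfc η α B nf • ∑ f, HF f * Nmat η α B HR HF k * HF f
        + Crc η α B nr • ∑ r, HR r * Nmat η α B HR HF k * HR r

/-- `W_k = J_{k−1} ⋯ J_1 J_0` for a finite sequence of batch selections. -/
def Wk {d nr nf : ℕ} (η α : ℝ) (B : ℕ) (HR : Fin nr → Matrix (Fin d) (Fin d) ℝ)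
    (HF : Fin nf → Matrix (Fin d) (Fin d) ℝ) {k : ℕ}
    (s : Fin k → (Fin nr → Bool) × (Fin nf → Bool)) : Matrix (Fin d) (Fin d) ℝ :=
  (List.ofFn fun i => Jop η α B HR HF (s i)).reverse.prod

/-- `E‖w_k‖² = E Tr(W_k W_kᵀ)`, the expectation taken over the i.i.d. Bernoulli
batch selections of the `k` steps. -/
def Ewk2 {d nr nf : ℕ} (η α : ℝ) (B : ℕ) (HR : Fin nr → Matrix (Fin d) (Fin d) ℝ)
    (HF : Fin nf → Matrix (Fin d) (Fin d) ℝ) (k : ℕ) : ℝ :=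
  ∑ s : Fin k → (Fin nr → Bool) × (Fin nf → Bool),
    (∏ i, selProb nr B (s i).1 * selProb nf B (s i).2) *
      (Wk η α B HR HF s * (Wk η α B HR HF s)ᵀ).trace

/-- `E[(e₁ᵀ w_k)²]`, i.e. the `(i0,i0)` entry of `E[W_k W_kᵀ]`. -/
def Ee1 {d nr nf : ℕ} (η α : ℝ) (B : ℕ) (HR : Fin nr → Matrix (Fin d) (Fin d) ℝ)
    (HF : Fin nf → Matrix (Fin d) (Fin d) ℝ) (i0 : Fin d) (k : ℕ) : ℝ :=
  ∑ s : Fin k → (Fin nr → Bool) × (Fin nf → Bool),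
    (∏ i, selProb nr B (s i).1 * selProb nf B (s i).2) *
      ((Wk η α B HR HF s * (Wk η α B HR HF s)ᵀ) i0 i0)

/-- Mixed Hessian `D_{rf} = C'_r H_r^R + C'_f H_f^F` for a retain/forget pair. -/
def Drf {d nr nf : ℕ} (Cr' Cf' : ℝ) (HR : Fin nr → Matrix (Fin d) (Fin d) ℝ)
    (HF : Fin nf → Matrix (Fin d) (Fin d) ℝ) (p : Fin nr × Fin nf) :
    Matrix (Fin d) (Fin d) ℝ :=
  Cr' • HR p.1 + Cf' • HF p.2

/-- Mix-Hessian `D = (1/(n_r n_f)) Σ_{r,f} D_{rf}`. -/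
def Dmix {d nr nf : ℕ} (Cr' Cf' : ℝ) (HR : Fin nr → Matrix (Fin d) (Fin d) ℝ)
    (HF : Fin nf → Matrix (Fin d) (Fin d) ℝ) : Matrix (Fin d) (Fin d) ℝ :=
  ((nr : ℝ) * nf)⁻¹ • ∑ p : Fin nr × Fin nf, Drf Cr' Cf' HR HF p

/-- Mix-coherence matrix `S_{(r,f),(r',f')} = ‖D_{rf}^{1/2} D_{r'f'}^{1/2}‖_F`. -/
def Smat {d nr nf : ℕ} (Cr' Cf' : ℝ) (HR : Fin nr → Matrix (Fin d) (Fin d) ℝ)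
    (HF : Fin nf → Matrix (Fin d) (Fin d) ℝ) :
    Matrix (Fin nr × Fin nf) (Fin nr × Fin nf) ℝ :=
  Matrix.of fun p q =>
    frob (psdSqrt (Drf Cr' Cf' HR HF p) * psdSqrt (Drf Cr' Cf' HR HF q))

/-- Unlearning coherence `σ = λ_max(S) / max_{(r,f)} λ_max(D_{rf})`. -/
def cohSigma {d nr nf : ℕ} (Cr' Cf' : ℝ) (HR : Fin nr → Matrix (Fin d) (Fin d) ℝ)
    (HF : Fin nf → Matrix (Fin d) (Fin d) ℝ) : ℝ :=
  lamMax (Smat Cr' Cf' HR HF) / ⨆ p : Fin nr × Fin nf, lamMax (Drf Cr' Cf' HR HF p)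

/-- Stacked filter-weight vector of the two-layer ReLU CNN signal-plus-noise model. -/
def wvec (d mfil : ℕ) (μ ξi : Fin d → ℝ) (yi : ℝ)
    (ai bi : Bool → Fin mfil → Bool) : (Bool × Fin mfil) × Fin d → ℝ :=
  fun p =>
    ((if p.1.1 then (1 : ℝ) else -1) / mfil) *
      ((if ai p.1.1 p.1.2 then (1 : ℝ) else 0) * μ p.2 +
        (if bi p.1.1 p.1.2 then (1 : ℝ) else 0) * yi * ξi p.2)

/-- Per-sample Hessian `H_i = ℓ''_i w_i w_iᵀ` of the signal-plus-noise model. -/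
def hessCNN (d mfil : ℕ) (μ ξi : Fin d → ℝ) (yi ℓi : ℝ)
    (ai bi : Bool → Fin mfil → Bool) :
    Matrix ((Bool × Fin mfil) × Fin d) ((Bool × Fin mfil) × Fin d) ℝ :=
  ℓi • vecMulVec (wvec d mfil μ ξi yi ai bi) (wvec d mfil μ ξi yi ai bi)

/-- Mixed Hessian `D_{rf} = C'_r H_r + C'_f H_{n_r+f}` in the CNN model, with the
retain set given by the first `n_r` samples and the forget set by the last `n_f`. -/
def DrfCNN (d mfil nr nf : ℕ) (μ : Fin d → ℝ) (ξ : Fin (nr + nf) → Fin d → ℝ)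
    (y ℓ : Fin (nr + nf) → ℝ) (a b : Fin (nr + nf) → Bool → Fin mfil → Bool)
    (Cr' Cf' : ℝ) (p : Fin nr × Fin nf) :
    Matrix ((Bool × Fin mfil) × Fin d) ((Bool × Fin mfil) × Fin d) ℝ :=
  Cr' • hessCNN d mfil μ (ξ (Fin.castAdd nf p.1)) (y (Fin.castAdd nf p.1))
        (ℓ (Fin.castAdd nf p.1)) (a (Fin.castAdd nf p.1)) (b (Fin.castAdd nf p.1))
    + Cf' • hessCNN d mfil μ (ξ (Fin.natAdd nr p.2)) (y (Fin.natAdd nr p.2))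
        (ℓ (Fin.natAdd nr p.2)) (a (Fin.natAdd nr p.2)) (b (Fin.natAdd nr p.2))

/-- Mix-coherence matrix of the CNN model. -/
def SmatCNN (d mfil nr nf : ℕ) (μ : Fin d → ℝ) (ξ : Fin (nr + nf) → Fin d → ℝ)
    (y ℓ : Fin (nr + nf) → ℝ) (a b : Fin (nr + nf) → Bool → Fin mfil → Bool)
    (Cr' Cf' : ℝ) : Matrix (Fin nr × Fin nf) (Fin nr × Fin nf) ℝ :=
  Matrix.of fun p q =>
    frob (psdSqrt (DrfCNN d mfil nr nf μ ξ y ℓ a b Cr' Cf' p) *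
      psdSqrt (DrfCNN d mfil nr nf μ ξ y ℓ a b Cr' Cf' q))

lemma frob_nonneg {n : Type*} [Fintype n] (M : Matrix n n ℝ) : 0 ≤ frob M :=
  Real.sqrt_nonneg _

lemma frob_sq {n : Type*} [Fintype n] (M : Matrix n n ℝ) :
    frob M ^ 2 = ∑ i, ∑ j, (M i j) ^ 2 := by
  rw [frob, Real.sq_sqrt]
  positivity

lemma trace_mul_le_frob {d : ℕ} (M N : Matrix (Fin d) (Fin d) ℝ) :
    (M * N).trace ≤ frob M * frob N := by
  have h1 : (M * N).trace = ∑ p : Fin d × Fin d, M p.1 p.2 * N p.2 p.1 := by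
    rw [Fintype.sum_prod_type]
    simp [Matrix.trace, Matrix.mul_apply, Matrix.diag]
  have h2 := Finset.sum_mul_sq_le_sq_mul_sq Finset.univ
    (fun p : Fin d × Fin d => M p.1 p.2) (fun p => N p.2 p.1)
  calc (M * N).trace ≤ |(M * N).trace| := le_abs_self _
    _ = Real.sqrt ((M * N).trace ^ 2) := (Real.sqrt_sq_eq_abs _).symm
    _ ≤ Real.sqrt ((∑ p : Fin d × Fin d, M p.1 p.2 ^ 2) *
        ∑ p : Fin d × Fin d, N p.2 p.1 ^ 2) := by
        apply Real.sqrt_le_sqrt; rw [h1]; exact h2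
    _ = frob M * frob N := by
        rw [Real.sqrt_mul (by positivity), frob, frob]
        congr 1
        · rw [Fintype.sum_prod_type]
        · rw [← Equiv.sum_comp (Equiv.prodComm (Fin d) (Fin d)), Fintype.sum_prod_type]
          simp

set_option maxHeartbeats 1000000 in
lemma frob_mul_le {d : ℕ} (M N : Matrix (Fin d) (Fin d) ℝ) :
    frob (M * N) ≤ frob M * frob N := by
  have h : frob (M * N) ^ 2 ≤ (frob M * frob N) ^ 2 := by
    rw [mul_pow, frob_sq, frob_sq, frob_sq]
    calc ∑ i, ∑ j, (M * N) i j ^ 2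
        ≤ ∑ i, ∑ j, (∑ l, M i l ^ 2) * (∑ l, N l j ^ 2) := by
          apply Finset.sum_le_sum; intro i _
          apply Finset.sum_le_sum; intro j _
          rw [Matrix.mul_apply]
          exact Finset.sum_mul_sq_le_sq_mul_sq Finset.univ _ _
      _ = (∑ i, ∑ j, M i j ^ 2) * (∑ i, ∑ j, N i j ^ 2) := by
          simp only [← Finset.mul_sum, ← Finset.sum_mul]
          congr 1
          exact Finset.sum_comm ..
  nlinarith [frob_nonneg (M * N), frob_nonneg M, frob_nonneg N,
    mul_nonneg (frob_nonneg M) (frob_nonneg N)]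

lemma frob_list_prod {d : ℕ} : ∀ (L : List (Matrix (Fin d) (Fin d) ℝ)), L ≠ [] →
    frob L.prod ≤ (L.map frob).prod
  | [], h => absurd rfl h
  | [M], _ => by simp
  | M :: N :: L, _ => by
    have ih := frob_list_prod (N :: L) (by simp)
    rw [List.prod_cons, List.map_cons, List.prod_cons]
    calc frob (M * (N :: L).prod) ≤ frob M * frob (N :: L).prod := frob_mul_le _ _
      _ ≤ frob M * ((N :: L).map frob).prod :=
        mul_le_mul_of_nonneg_left ih (frob_nonneg M)

lemma psdSqrt_mul_self {n : Type*} [Fintype n] [DecidableEq n] {A : Matrix n n ℝ}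
    (h : A.PosSemidef) : psdSqrt A * psdSqrt A = A := by
  rw [psdSqrt, dif_pos h]
  have hU : (star h.1.eigenvectorUnitary : Matrix n n ℝ) * (h.1.eigenvectorUnitary : Matrix n n ℝ)
      = 1 := Unitary.coe_star_mul_self _
  calc _ = (h.1.eigenvectorUnitary : Matrix n n ℝ) *
        (diagonal (Real.sqrt ∘ h.1.eigenvalues) *
          ((star h.1.eigenvectorUnitary : Matrix n n ℝ) * (h.1.eigenvectorUnitary : Matrix n n ℝ)) *
          diagonal (Real.sqrt ∘ h.1.eigenvalues)) *
        (star h.1.eigenvectorUnitary : Matrix n n ℝ) := by simp only [Matrix.mul_assoc]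
    _ = (h.1.eigenvectorUnitary : Matrix n n ℝ) * Matrix.diagonal ((RCLike.ofReal : ℝ → ℝ) ∘ h.1.eigenvalues) *
        (star h.1.eigenvectorUnitary : Matrix n n ℝ) := by
      rw [hU, Matrix.mul_one, diagonal_mul_diagonal]
      refine congrArg (fun D => (h.1.eigenvectorUnitary : Matrix n n ℝ) * D *
        (star h.1.eigenvectorUnitary : Matrix n n ℝ)) (congrArg Matrix.diagonal ?_)
      funext i
      simp [Real.mul_self_sqrt (h.eigenvalues_nonneg i)]
    _ = A := by
      conv_rhs => rw [h.1.spectral_theorem]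
      simp

lemma chain_prod {d : ℕ} (T : ℕ → Matrix (Fin d) (Fin d) ℝ) :
    ∀ n, 1 ≤ n →
    (List.ofFn fun i : Fin n => T i * T i).prod =
      T 0 * (List.ofFn fun i : Fin (n - 1) => T i * T (i + 1)).prod * T (n - 1) := by
  intro n
  induction n with
  | zero => omega
  | succ m ih =>
    intro _
    rcases Nat.eq_or_lt_of_le (Nat.one_le_iff_ne_zero.mpr (Nat.succ_ne_zero m)) with h | h
    · obtain rfl : m = 0 := by omega
      simp [mul_assoc]
    · have hm : 1 ≤ m := by omega
      have h1 : (List.ofFn fun i : Fin (m + 1) => T i * T i).prod =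
          (List.ofFn fun i : Fin m => T i * T i).prod * (T m * T m) := by
        rw [List.ofFn_succ', List.concat_eq_append, List.prod_append]
        simp
      have h2 : m - 1 + 1 = m := by omega
      have h3 : (List.ofFn fun i : Fin m => T i * T (i + 1)).prod =
          (List.ofFn fun i : Fin (m - 1) => T i * T (i + 1)).prod * (T (m - 1) * T m) := by
        conv_lhs => rw [show m = (m - 1) + 1 by omega]
        rw [List.ofFn_succ', List.concat_eq_append, List.prod_append]
        simp [h2]
      rw [h1, ih hm, Nat.add_sub_cancel, h3]
      simp only [mul_assoc]

/-- chain trace inequality.  For PSD matrices `A_1, …, A_k` (`k ≥ 2`),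
`Tr(A_1 ⋯ A_k) ≤ ‖A_k^{1/2} A_1^{1/2}‖_F · Π_{i=1}^{k−1} ‖A_i^{1/2} A_{i+1}^{1/2}‖_F`. -/
theorem stmt12 (d k : ℕ) (hk : 2 ≤ k)
    (A : Fin k → Matrix (Fin d) (Fin d) ℝ) (hA : ∀ i, (A i).PosSemidef) :
    ((List.ofFn A).prod).trace ≤
      frob (psdSqrt (A ⟨k - 1, by omega⟩) * psdSqrt (A ⟨0, by omega⟩)) *
        ∏ i : Fin (k - 1),
          frob (psdSqrt (A ⟨(i : ℕ), by have := i.isLt; omega⟩) *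
            psdSqrt (A ⟨(i : ℕ) + 1, by have := i.isLt; omega⟩)) := by
  classical
  set T : ℕ → Matrix (Fin d) (Fin d) ℝ :=
    fun i => if h : i < k then psdSqrt (A ⟨i, h⟩) else 1 with hTdef
  have hT : ∀ (i : ℕ) (h : i < k), T i = psdSqrt (A ⟨i, h⟩) := fun i h => dif_pos h
  have step1 : (List.ofFn A).prod = (List.ofFn fun i : Fin k => T i * T i).prod := by
    have hfun : A = fun i : Fin k => T i * T i := by
      funext i
      rw [hT i i.isLt, Fin.eta, psdSqrt_mul_self (hA i)]
    rw [hfun]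
  set P : Matrix (Fin d) (Fin d) ℝ :=
    (List.ofFn fun i : Fin (k - 1) => T i * T (i + 1)).prod with hP
  have step2 : ((List.ofFn A).prod).trace = (P * (T (k - 1) * T 0)).trace := by
    rw [step1, chain_prod T k (by omega), mul_assoc, Matrix.trace_mul_comm, mul_assoc]
  have step3 : (P * (T (k - 1) * T 0)).trace ≤ frob P * frob (T (k - 1) * T 0) :=
    trace_mul_le_frob _ _
  have step4 : frob P ≤ ∏ i : Fin (k - 1),
      frob (psdSqrt (A ⟨(i : ℕ), by have := i.isLt; omega⟩) *
        psdSqrt (A ⟨(i : ℕ) + 1, by have := i.isLt; omega⟩)) := by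
    have hne : (List.ofFn fun i : Fin (k - 1) => T i * T (i + 1)) ≠ [] := by
      have : (List.ofFn fun i : Fin (k - 1) => T i * T (i + 1)).length = k - 1 := by simp
      intro hcon
      rw [hcon] at this
      simp at this
      omega
    refine (frob_list_prod _ hne).trans_eq ?_
    rw [List.map_ofFn, List.prod_ofFn]
    refine Finset.prod_congr rfl fun i _ => ?_
    have h1 : (i : ℕ) < k := by have := i.isLt; omega
    have h2 : (i : ℕ) + 1 < k := by have := i.isLt; omega
    simp only [Function.comp_apply, hT _ h1, hT _ h2]
  have hM : T (k - 1) * T 0 = psdSqrt (A ⟨k - 1, by omega⟩) * psdSqrt (A ⟨0, by omega⟩) := by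
    rw [hT (k - 1) (by omega), hT 0 (by omega)]
  calc ((List.ofFn A).prod).trace = (P * (T (k - 1) * T 0)).trace := step2
    _ ≤ frob P * frob (T (k - 1) * T 0) := step3
    _ = frob (T (k - 1) * T 0) * frob P := mul_comm _ _
    _ ≤ frob (T (k - 1) * T 0) * ∏ i : Fin (k - 1),
          frob (psdSqrt (A ⟨(i : ℕ), by have := i.isLt; omega⟩) *
            psdSqrt (A ⟨(i : ℕ) + 1, by have := i.isLt; omega⟩)) :=
        mul_le_mul_of_nonneg_left step4 (frob_nonneg _)
    _ = _ := by rw [hM]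

end
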